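/- Consider the recursion x_k = ζ^{c_{k-1}}((1-b)x_0 + b x_{k-1}) + (1-ζ^{c_{k-1}}) u_0, with x_0, u_0 ∈ [-1,1], ζ ∈ (0,1], b ∈ [0,1], and binary click values c_j ∈ {0,1}. Then for every k ≥ 0, x_k = (1 - Γ_{k-1}) x_0 + Γ_{k-1} u_0, where Γ_{k-1} = (1-ζ) ∑_{j=0}^{k-1} c_j b^{k-j-1} ζ^{∑_{n=j+1}^{k-1} c_n}. -/
import Mathlib


open Finset

/-- Closed form of the opinion recursion (Lemma 1):
`x_k = (1 - Γ_{k-1}) x_0 + Γ_{k-1} u_0`. -/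
theorem opinion_closed_form
    (x0 u0 ζ b : ℝ) (x : ℕ → ℝ) (c : ℕ → ℕ)
    (hx0 : x 0 = x0) (hx0mem : x0 ∈ Set.Icc (-1 : ℝ) 1) (hu0 : u0 ∈ Set.Icc (-1 : ℝ) 1)
    (hζ : ζ ∈ Set.Ioc (0 : ℝ) 1) (hb : b ∈ Set.Icc (0 : ℝ) 1)
    (hc : ∀ j, c j = 0 ∨ c j = 1)
    (hrec : ∀ k, x (k + 1) =
      ζ ^ (c k) * ((1 - b) * x0 + b * x k) + (1 - ζ ^ (c k)) * u0) :
    ∀ k, x k =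
      (1 - (1 - ζ) * ∑ j ∈ Finset.range k,
          (c j : ℝ) * b ^ (k - j - 1) * ζ ^ (∑ n ∈ Finset.Ico (j + 1) k, c n)) * x0
      + ((1 - ζ) * ∑ j ∈ Finset.range k,
          (c j : ℝ) * b ^ (k - j - 1) * ζ ^ (∑ n ∈ Finset.Ico (j + 1) k, c n)) * u0 := by
  intro k
  induction k with
  | zero => simp [hx0]
  | succ k ih =>
    have key : ∑ j ∈ Finset.range (k+1),
          (c j : ℝ) * b ^ (k+1 - j - 1) * ζ ^ (∑ n ∈ Finset.Ico (j + 1) (k+1), c n)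
        = ζ ^ (c k) * b * (∑ j ∈ Finset.range k,
            (c j : ℝ) * b ^ (k - j - 1) * ζ ^ (∑ n ∈ Finset.Ico (j + 1) k, c n)) + c k := by
      rw [Finset.sum_range_succ, Finset.mul_sum]
      congr 1
      · apply Finset.sum_congr rfl
        intro j hj
        have hj' : j < k := Finset.mem_range.mp hj
        rw [Finset.sum_Ico_succ_top (by omega)]
        have h1 : k + 1 - j - 1 = (k - j - 1) + 1 := by omega
        rw [h1, pow_succ, pow_add]
        ring
      · simp
    have hck : (ζ : ℝ) ^ (c k) = 1 - (1 - ζ) * c k := by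
      rcases hc k with h | h <;> simp [h]
    rw [hrec k, ih, key, hck]
    ring
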